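/- Let M be a pointed metric space, let {Y_i}_{i ∈ I} be a family of real Banach spaces, and let Y = (⊕_{i∈I} Y_i)_{ℓ∞} be their ℓ∞-sum, i.e., the Banach space of bounded families (y_i)_{i∈I} with y_i ∈ Y_i, equipped with the norm ‖(y_i)‖ = sup_{i∈I} ‖y_i‖. Assume that for each i ∈ I the pair (M, Y_i) has the Lip-BPB property witnessed by a function η_i, and that inf{η_i(ε) : i ∈ I} > 0 for every ε > 0. Then the pair (M, Y) has the Lip-BPB property. -/

import Mathlib

open Set Metric NNReal MeasureTheory

/-- A Lipschitz map vanishing at the base point `z`, i.e. an element of `Lip₀(M,Y)`. -/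
def IsLip0 {M Y : Type*} [MetricSpace M] [NormedAddCommGroup Y]
    (z : M) (F : M → Y) : Prop :=
  (∃ K : ℝ≥0, LipschitzWith K F) ∧ F z = 0

/-- The Lipschitz norm `‖F‖_L = sup {‖F p - F q‖ / d(p,q) : p ≠ q}`. -/
noncomputable def lipNorm {M Y : Type*} [MetricSpace M] [NormedAddCommGroup Y]
    (F : M → Y) : ℝ :=
  sSup {r : ℝ | ∃ p q : M, p ≠ q ∧ r = ‖F p - F q‖ / dist p q}

/-- `F` strongly attains its norm. -/
def StronglyAttains {M Y : Type*} [MetricSpace M] [NormedAddCommGroup Y]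
    (F : M → Y) : Prop :=
  ∃ p q : M, p ≠ q ∧ ‖F p - F q‖ = lipNorm F * dist p q

/-- `F` is Lipschitz compact: its Lipschitz image is relatively compact. -/
def IsLipCompact {M Y : Type*} [MetricSpace M] [NormedAddCommGroup Y] [NormedSpace ℝ Y]
    (F : M → Y) : Prop :=
  IsCompact (closure {y : Y | ∃ p q : M, p ≠ q ∧ y = (dist p q)⁻¹ • (F p - F q)})

/-- The pair `(M,Y)` has the Lip-BPB property witnessed by the function `η`. -/
def LipBPBWith (M : Type*) [MetricSpace M] (z : M)
    (Y : Type*) [NormedAddCommGroup Y] (η : ℝ → ℝ) : Prop :=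
  (∀ ε > 0, η ε > 0) ∧
  ∀ ε > 0, ∀ F : M → Y, IsLip0 z F → lipNorm F = 1 →
    ∀ p q : M, p ≠ q → ‖F p - F q‖ > (1 - η ε) * dist p q →
      ∃ G : M → Y, IsLip0 z G ∧ ∃ r s : M, r ≠ s ∧
        ‖G r - G s‖ = dist r s ∧ lipNorm G = 1 ∧
        lipNorm (fun x => G x - F x) < ε ∧
        (dist p r + dist q s) / dist p q < ε

/-- The pair `(M,Y)` has the Lip-BPB property. -/
def LipBPB (M : Type*) [MetricSpace M] (z : M)
    (Y : Type*) [NormedAddCommGroup Y] : Prop :=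
  ∃ η : ℝ → ℝ, LipBPBWith M z Y η

/-- The pair `(M,Y)` has the Lip-BPB property for Lipschitz compact maps
witnessed by the function `η`. -/
def LipBPBCompactWith (M : Type*) [MetricSpace M] (z : M)
    (Y : Type*) [NormedAddCommGroup Y] [NormedSpace ℝ Y] (η : ℝ → ℝ) : Prop :=
  (∀ ε > 0, η ε > 0) ∧
  ∀ ε > 0, ∀ F : M → Y, IsLip0 z F → IsLipCompact F → lipNorm F = 1 →
    ∀ p q : M, p ≠ q → ‖F p - F q‖ > (1 - η ε) * dist p q →
      ∃ G : M → Y, IsLip0 z G ∧ IsLipCompact G ∧ ∃ r s : M, r ≠ s ∧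
        ‖G r - G s‖ = dist r s ∧ lipNorm G = 1 ∧
        lipNorm (fun x => G x - F x) < ε ∧
        (dist p r + dist q s) / dist p q < ε

/-- The pair `(M,Y)` has the Lip-BPB property for Lipschitz compact maps. -/
def LipBPBCompact (M : Type*) [MetricSpace M] (z : M)
    (Y : Type*) [NormedAddCommGroup Y] [NormedSpace ℝ Y] : Prop :=
  ∃ η : ℝ → ℝ, LipBPBCompactWith M z Y η

/-- `SA(M,Y)` is dense in `Lip₀(M,Y)`. -/
def SADense (M : Type*) [MetricSpace M] (z : M)
    (Y : Type*) [NormedAddCommGroup Y] : Prop :=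
  ∀ F : M → Y, IsLip0 z F → ∀ ε > 0,
    ∃ G : M → Y, IsLip0 z G ∧ StronglyAttains G ∧ lipNorm (fun x => G x - F x) < ε

/-- `SA_K(M,Y)` is dense in `Lipc(M,Y)`. -/
def SAKDense (M : Type*) [MetricSpace M] (z : M)
    (Y : Type*) [NormedAddCommGroup Y] [NormedSpace ℝ Y] : Prop :=
  ∀ F : M → Y, IsLip0 z F → IsLipCompact F → ∀ ε > 0,
    ∃ G : M → Y, IsLip0 z G ∧ IsLipCompact G ∧ StronglyAttains G ∧
      lipNorm (fun x => G x - F x) < ε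

section helpers
variable {M Y : Type*} [MetricSpace M] [NormedAddCommGroup Y]

lemma lipNorm_nonneg (F : M → Y) : 0 ≤ lipNorm F := by
  apply Real.sSup_nonneg
  rintro r ⟨p, q, hpq, rfl⟩
  positivity

lemma lipNorm_le {F : M → Y} {C : ℝ} (hC : 0 ≤ C)
    (h : ∀ p q : M, p ≠ q → ‖F p - F q‖ ≤ C * dist p q) : lipNorm F ≤ C := by
  apply Real.sSup_le _ hC
  rintro r ⟨p, q, hpq, rfl⟩
  rw [div_le_iff₀ (dist_pos.2 hpq)]
  exact h p q hpq

lemma lipschitzWith_of_bound {f : M → Y} (C : ℝ≥0)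
    (h : ∀ x y, ‖f x - f y‖ ≤ C * dist x y) : LipschitzWith C f :=
  LipschitzWith.of_dist_le_mul (by simpa [dist_eq_norm] using h)

lemma exists_lip_of_bound {f : M → Y} {C : ℝ} (hC : 0 ≤ C)
    (h : ∀ x y, ‖f x - f y‖ ≤ C * dist x y) : ∃ K : ℝ≥0, LipschitzWith K f :=
  ⟨⟨C, hC⟩, LipschitzWith.of_dist_le_mul (fun x y => by rw [dist_eq_norm]; exact h x y)⟩

lemma norm_sub_le_of_lip {f : M → Y} {K : ℝ≥0} (hf : LipschitzWith K f) (x y : M) :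
    ‖f x - f y‖ ≤ K * dist x y := by
  simpa [dist_eq_norm] using hf.dist_le_mul x y

lemma div_le_lipNorm {F : M → Y} (hF : ∃ K : ℝ≥0, LipschitzWith K F)
    (p q : M) (hpq : p ≠ q) : ‖F p - F q‖ / dist p q ≤ lipNorm F := by
  obtain ⟨K, hF⟩ := hF
  apply le_csSup
  · refine ⟨K, ?_⟩
    rintro r ⟨a, b, hab, rfl⟩
    rw [div_le_iff₀ (dist_pos.2 hab)]
    simpa [dist_eq_norm] using hF.dist_le_mul a b
  · exact ⟨p, q, hpq, rfl⟩

lemma norm_sub_le_lipNorm {F : M → Y} (hF : ∃ K : ℝ≥0, LipschitzWith K F)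
    (p q : M) : ‖F p - F q‖ ≤ lipNorm F * dist p q := by
  rcases eq_or_ne p q with rfl | hpq
  · simp
  · rw [← div_le_iff₀ (dist_pos.2 hpq)]
    exact div_le_lipNorm hF p q hpq

end helpers

set_option maxHeartbeats 2000000 in
/-- If each pair `(M, Y i)` has the Lip-BPB property witnessed by `η i` with
`inf_i (η i ε) > 0` for every `ε > 0`, then `(M, (⊕ᵢ Y i)_{ℓ∞})` has the Lip-BPB property. -/
theorem lipBPB_lpInfty_sum {M : Type*} [MetricSpace M] [CompleteSpace M] (z : M)
    {ι : Type*} (Y : ι → Type*) [∀ i, NormedAddCommGroup (Y i)]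
    [∀ i, NormedSpace ℝ (Y i)] [∀ i, CompleteSpace (Y i)]
    (η : ι → ℝ → ℝ) (h : ∀ i, LipBPBWith M z (Y i) (η i))
    (hinf : ∀ ε > (0 : ℝ), ∃ c > (0 : ℝ), ∀ i, c ≤ η i ε) :
    LipBPB M z (lp Y ⊤) := by
  classical
  choose c hc0 hc using hinf
  refine ⟨fun ε => if hε : ε > 0 then
      min (c (ε/2) (half_pos hε)) (min (ε/2) (1/2)) else 1, ?_, ?_⟩
  · intro ε hε
    simp only [dif_pos hε]
    exact lt_min (hc0 _ _) (lt_min (half_pos hε) one_half_pos)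
  · intro ε hε F hF hF1 p q hpq hFpq
    simp only [dif_pos hε] at hFpq
    set t : ℝ := min (c (ε/2) (half_pos hε)) (min (ε/2) (1/2)) with ht
    have ht0 : 0 < t := lt_min (hc0 _ _) (lt_min (half_pos hε) one_half_pos)
    have hthalf : t ≤ 1/2 := le_trans (min_le_right _ _) (min_le_right _ _)
    have hteps : t ≤ ε/2 := le_trans (min_le_right _ _) (min_le_left _ _)
    have htη : ∀ i, t ≤ η i (ε/2) := fun i => le_trans (min_le_left _ _) (hc _ _ i)
    have hd : 0 < dist p q := dist_pos.2 hpq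
    obtain ⟨KF, hKF⟩ := hF.1
    have hFz : F z = 0 := hF.2
    -- find the coordinate i
    have h1t : (0:ℝ) ≤ 1 - t := by linarith
    obtain ⟨i, hi⟩ : ∃ i, (1 - t) * dist p q < ‖(F p - F q : lp Y ⊤) i‖ := by
      by_contra hcon
      push_neg at hcon
      have : ‖F p - F q‖ ≤ (1 - t) * dist p q :=
        lp.norm_le_of_forall_le (by positivity) hcon
      linarith
    -- the coordinate function
    set Fi : M → Y i := fun x => F x i with hFi
    have hcoord : ∀ x y : M, ((F x - F y : lp Y ⊤) : ∀ j, Y j) i = Fi x - Fi y := by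
      intro x y; simp [hFi]
    have hKFi : LipschitzWith KF Fi := by
      apply lipschitzWith_of_bound
      intro x y
      rw [← hcoord x y]
      calc ‖(F x - F y : lp Y ⊤) i‖ ≤ ‖F x - F y‖ :=
            lp.norm_apply_le_norm ENNReal.top_ne_zero _ i
        _ ≤ KF * dist x y := by simpa [dist_eq_norm] using hKF.dist_le_mul x y
    rw [hcoord p q] at hi
    set a : ℝ := lipNorm Fi with ha
    have ha_le : a ≤ 1 := by
      apply lipNorm_le zero_le_one
      intro x y hxy
      rw [one_mul, ← hcoord x y]
      calc ‖(F x - F y : lp Y ⊤) i‖ ≤ ‖F x - F y‖ :=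
            lp.norm_apply_le_norm ENNReal.top_ne_zero _ i
        _ ≤ lipNorm F * dist x y := norm_sub_le_lipNorm ⟨_, hKF⟩ x y
        _ = dist x y := by rw [hF1, one_mul]
    have ha_lb : 1 - t < a := by
      have := div_le_lipNorm ⟨_, hKFi⟩ p q hpq
      rw [← ha] at this
      have h2 : (1 - t) < ‖Fi p - Fi q‖ / dist p q := by
        rw [lt_div_iff₀ hd]; exact hi
      linarith
    have ha0 : 0 < a := by linarith
    -- normalized coordinate function
    set F' : M → Y i := fun x => a⁻¹ • Fi x with hF'
    have hnorm' : ∀ x y : M, ‖F' x - F' y‖ = a⁻¹ * ‖Fi x - Fi y‖ := by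
      intro x y
      rw [hF']
      simp only [← smul_sub, norm_smul, Real.norm_eq_abs,
        abs_of_pos (inv_pos.2 ha0)]
    have hK'bound : ∀ x y : M, ‖F' x - F' y‖ ≤ a⁻¹ * KF * dist x y := by
      intro x y
      rw [hnorm' x y, mul_assoc]
      exact mul_le_mul_of_nonneg_left (norm_sub_le_of_lip hKFi x y) (inv_pos.2 ha0).le
    have hK' : ∃ K : ℝ≥0, LipschitzWith K F' :=
      exists_lip_of_bound (by positivity) hK'bound
    have hF'z : F' z = 0 := by
      have : Fi z = 0 := by simp [hFi, hFz]
      simp [hF', this]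
    have hF'1 : lipNorm F' = 1 := by
      apply le_antisymm
      · apply lipNorm_le zero_le_one
        intro x y hxy
        rw [hnorm' x y, one_mul]
        calc a⁻¹ * ‖Fi x - Fi y‖ ≤ a⁻¹ * (a * dist x y) := by
              apply mul_le_mul_of_nonneg_left _ (inv_pos.2 ha0).le
              exact norm_sub_le_lipNorm ⟨_, hKFi⟩ x y
          _ = dist x y := by field_simp
      · have key : a ≤ a * lipNorm F' := by
          apply lipNorm_le (mul_nonneg ha0.le (lipNorm_nonneg _))
          intro x y hxy
          have : ‖Fi x - Fi y‖ = a * ‖F' x - F' y‖ := by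
            rw [hnorm' x y]; field_simp
          rw [this, mul_assoc]
          exact mul_le_mul_of_nonneg_left (norm_sub_le_lipNorm hK' x y) ha0.le
        nlinarith
    -- apply the BPB property for (M, Y i)
    have hainv : 1 ≤ a⁻¹ := by
      nlinarith [mul_inv_cancel₀ ha0.ne', inv_pos.2 ha0]
    have hbound : ‖F' p - F' q‖ > (1 - η i (ε/2)) * dist p q := by
      have h1 : ‖Fi p - Fi q‖ ≤ ‖F' p - F' q‖ := by
        rw [hnorm' p q]
        nlinarith [norm_nonneg (Fi p - Fi q), hainv]
      have h2 : (1 - η i (ε/2)) * dist p q ≤ (1 - t) * dist p q := by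
        have := htη i
        nlinarith
      linarith
    obtain ⟨G', hG', r, s, hrs, hGrs, hGnorm, hGF', hdist⟩ :=
      (h i).2 (ε/2) (half_pos hε) F' ⟨hK', hF'z⟩ hF'1 p q hpq hbound
    obtain ⟨KG, hKG⟩ := hG'.1
    -- build the new map G into the lp space
    have hmem : ∀ x : M, Memℓp (Function.update (F x : ∀ j, Y j) i (G' x)) ⊤ := by
      intro x
      apply memℓp_infty
      refine ⟨max ‖F x‖ ‖G' x‖, ?_⟩
      rintro _ ⟨j, rfl⟩
      rcases eq_or_ne j i with rfl | hj
      · simp only [Function.update_self]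
        exact le_max_right _ _
      · simp only [Function.update_of_ne hj]
        exact le_max_of_le_left (lp.norm_apply_le_norm ENNReal.top_ne_zero _ j)
    set G : M → lp Y ⊤ := fun x => ⟨Function.update (F x : ∀ j, Y j) i (G' x), hmem x⟩
      with hG
    have hGapp_i : ∀ x : M, (G x : ∀ j, Y j) i = G' x := by
      intro x; simp [hG, Function.update_self]
    have hGapp_ne : ∀ (x : M) (j : ι), j ≠ i → (G x : ∀ j, Y j) j = F x j := by
      intro x j hj; simp [hG, Function.update_of_ne hj]
    -- pointwise norm bound for differences of G
    have hGdiff : ∀ x y : M, ‖G x - G y‖ ≤ dist x y := by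
      intro x y
      apply lp.norm_le_of_forall_le dist_nonneg
      intro j
      have hsub : ((G x - G y : lp Y ⊤) : ∀ j, Y j) j = (G x : ∀ j, Y j) j - (G y : ∀ j, Y j) j := by
        simp
      rw [hsub]
      rcases eq_or_ne j i with rfl | hj
      · rw [hGapp_i, hGapp_i]
        calc ‖G' x - G' y‖ ≤ lipNorm G' * dist x y := norm_sub_le_lipNorm ⟨_, hKG⟩ x y
          _ = dist x y := by rw [hGnorm, one_mul]
      · rw [hGapp_ne x j hj, hGapp_ne y j hj]
        have : F x j - F y j = ((F x - F y : lp Y ⊤) : ∀ j, Y j) j := by simp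
        rw [this]
        calc ‖((F x - F y : lp Y ⊤) : ∀ j, Y j) j‖ ≤ ‖F x - F y‖ :=
              lp.norm_apply_le_norm ENNReal.top_ne_zero _ j
          _ ≤ lipNorm F * dist x y := norm_sub_le_lipNorm ⟨_, hKF⟩ x y
          _ = dist x y := by rw [hF1, one_mul]
    have hGlip : LipschitzWith 1 G := by
      apply lipschitzWith_of_bound
      intro x y
      rw [NNReal.coe_one, one_mul]
      exact hGdiff x y
    have hGz : G z = 0 := by
      apply lp.ext
      have : (G z : ∀ j, Y j) = Function.update (F z : ∀ j, Y j) i (G' z) := rfl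
      rw [this, hG'.2, hFz]
      simp [lp.coeFn_zero]
      exact Function.update_eq_self i _
    -- norm at r,s
    have hGcoord : ‖G' r - G' s‖ ≤ ‖G r - G s‖ := by
      have hsub : ((G r - G s : lp Y ⊤) : ∀ j, Y j) i = G' r - G' s := by
        simp [hGapp_i]
      rw [← hsub]
      exact lp.norm_apply_le_norm ENNReal.top_ne_zero _ i
    have hGrs_eq : ‖G r - G s‖ = dist r s := by
      apply le_antisymm (hGdiff r s)
      rw [← hGrs]; exact hGcoord
    have hGnorm1 : lipNorm G = 1 := by
      apply le_antisymm
      · apply lipNorm_le zero_le_one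
        intro x y hxy
        rw [one_mul]; exact hGdiff x y
      · have := div_le_lipNorm ⟨1, hGlip⟩ r s hrs
        rw [hGrs_eq, div_self (dist_pos.2 hrs).ne'] at this
        exact this
    -- the difference bound
    set Δ : M → Y i := fun x => G' x - Fi x with hΔ
    have hΔlip : LipschitzWith (KG + KF) Δ := by
      apply lipschitzWith_of_bound
      intro x y
      have h1 : ‖G' x - G' y‖ ≤ KG * dist x y := norm_sub_le_of_lip hKG x y
      have h2 : ‖Fi x - Fi y‖ ≤ KF * dist x y := norm_sub_le_of_lip hKFi x y
      have : Δ x - Δ y = (G' x - G' y) - (Fi x - Fi y) := by simp only [hΔ]; abel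
      rw [this]
      push_cast
      calc ‖(G' x - G' y) - (Fi x - Fi y)‖ ≤ ‖G' x - G' y‖ + ‖Fi x - Fi y‖ :=
            norm_sub_le _ _
        _ ≤ KG * dist x y + KF * dist x y := add_le_add h1 h2
        _ = (KG + KF) * dist x y := by ring
    have hΔsmall : lipNorm Δ < ε := by
      have hKGF : ∃ K : ℝ≥0, LipschitzWith K (fun x => G' x - F' x) := by
        apply exists_lip_of_bound (C := KG + a⁻¹ * KF) (by positivity)
        intro x y
        have h1 : ‖G' x - G' y‖ ≤ KG * dist x y := norm_sub_le_of_lip hKG x y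
        have h2 : ‖F' x - F' y‖ ≤ a⁻¹ * KF * dist x y := hK'bound x y
        have heq : (G' x - F' x) - (G' y - F' y) = (G' x - G' y) - (F' x - F' y) := by abel
        rw [heq]
        calc ‖(G' x - G' y) - (F' x - F' y)‖ ≤ ‖G' x - G' y‖ + ‖F' x - F' y‖ :=
              norm_sub_le _ _
          _ ≤ KG * dist x y + a⁻¹ * KF * dist x y := add_le_add h1 h2
          _ = (KG + a⁻¹ * KF) * dist x y := by ring
      have step : lipNorm Δ ≤ lipNorm (fun x => G' x - F' x) + (1 - a) := by
        apply lipNorm_le (add_nonneg (lipNorm_nonneg _) (by linarith))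
        intro x y hxy
        have heq : Δ x - Δ y = ((G' x - F' x) - (G' y - F' y)) + ((F' x - Fi x) - (F' y - Fi y)) := by
          simp only [hΔ]; abel
        have h2 : ‖(F' x - Fi x) - (F' y - Fi y)‖ ≤ (1 - a) * dist x y := by
          have : (F' x - Fi x) - (F' y - Fi y) = (a⁻¹ - 1) • (Fi x - Fi y) := by
            simp only [hF']; module
          rw [this, norm_smul, Real.norm_eq_abs, abs_of_nonneg (by
            rw [sub_nonneg]; exact hainv)]
          have hFib : ‖Fi x - Fi y‖ ≤ a * dist x y := norm_sub_le_lipNorm ⟨_, hKFi⟩ x y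
          have hinv : (a⁻¹ - 1) * a = 1 - a := by field_simp
          calc (a⁻¹ - 1) * ‖Fi x - Fi y‖ ≤ (a⁻¹ - 1) * (a * dist x y) := by
                apply mul_le_mul_of_nonneg_left hFib
                rw [sub_nonneg]; exact hainv
            _ = (1 - a) * dist x y := by rw [← mul_assoc, hinv]
        calc ‖Δ x - Δ y‖ ≤ ‖(G' x - F' x) - (G' y - F' y)‖ + ‖(F' x - Fi x) - (F' y - Fi y)‖ := by
              rw [heq]; exact norm_add_le _ _
          _ ≤ lipNorm (fun x => G' x - F' x) * dist x y + (1 - a) * dist x y :=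
              add_le_add (norm_sub_le_lipNorm hKGF x y) h2
          _ = (lipNorm (fun x => G' x - F' x) + (1 - a)) * dist x y := by ring
      have h1a : 1 - a < t := by linarith
      calc lipNorm Δ ≤ lipNorm (fun x => G' x - F' x) + (1 - a) := step
        _ < ε/2 + ε/2 := by
            apply add_lt_add_of_lt_of_le hGF'
            linarith
        _ = ε := by ring
    have hGFdiff : lipNorm (fun x => G x - F x) < ε := by
      apply lt_of_le_of_lt _ hΔsmall
      apply lipNorm_le (lipNorm_nonneg Δ)
      intro x y hxy
      apply lp.norm_le_of_forall_le (mul_nonneg (lipNorm_nonneg _) dist_nonneg)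
      intro j
      have hsub : (((G x - F x) - (G y - F y) : lp Y ⊤) : ∀ j, Y j) j
          = ((G x : ∀ j, Y j) j - F x j) - ((G y : ∀ j, Y j) j - F y j) := by
        simp
      rw [hsub]
      rcases eq_or_ne i j with rfl | hj
      · rw [hGapp_i, hGapp_i]
        have : (G' x - F x i) - (G' y - F y i) = Δ x - Δ y := by rw [hΔ, hFi]
        rw [this]
        exact norm_sub_le_lipNorm ⟨_, hΔlip⟩ x y
      · rw [hGapp_ne x j hj.symm, hGapp_ne y j hj.symm]
        simp [mul_nonneg (lipNorm_nonneg Δ) dist_nonneg]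
    refine ⟨G, ⟨⟨1, hGlip⟩, hGz⟩, r, s, hrs, hGrs_eq, hGnorm1, hGFdiff, ?_⟩
    calc (dist p r + dist q s) / dist p q < ε/2 := hdist
      _ < ε := by linarith
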